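/- In the all-to-one Bell game with n ≥ 2 parties, any partial-order (equivalently, causal) correlations satisfy Pr[a = x] ≤ 1 − 1/(2n), where the referee picks r ∈ [n] and x ∈ {0,1} uniformly, announces r to everyone and x to everyone except r, and the parties win if r outputs x; moreover this inequality is facet-defining for the all-to-one partial-order-correlations polytope. -/
import Mathlib


noncomputable section

/-- Deterministic all-to-one partial-order correlations: 0/1 vectors
`(p(0|r,x))_{(r,x)}` such that the output of some (minimal) party `r` is
independent of the broadcast bit `x`. -/
def detA2O (n : ℕ) : Set (Fin n × Bool → ℝ) :=
  {v | (∀ i, v i = 0 ∨ v i = 1) ∧ ∃ r : Fin n, v (r, false) = v (r, true)}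

/-- The all-to-one partial-order-correlations polytope `P^{all-to-1}_n ⊆ ℝ^{2n}`. -/
def A2Opoly (n : ℕ) : Set (Fin n × Bool → ℝ) := convexHull ℝ (detA2O n)

/-- All-to-one partial-order (equivalently, causal) correlations:
`p r x a` is the probability that the receiver `r` outputs `a` when the bit
`x` is given to all other parties, decomposing as
`p(a|r,x) = μ(r)·q₁(a|r) + (1−μ(r))·q₂(a|r,x)`. -/
def IsA2OCorr (n : ℕ) (p : Fin n → Bool → Bool → ℝ) : Prop :=
  ∃ (μ : Fin n → ℝ) (q1 : Fin n → Bool → ℝ) (q2 : Fin n → Bool → Bool → ℝ),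
    (∀ r, 0 ≤ μ r) ∧ (∑ r, μ r = 1) ∧
    (∀ r a, 0 ≤ q1 r a) ∧ (∀ r, ∑ a, q1 r a = 1) ∧
    (∀ r x a, 0 ≤ q2 r x a) ∧ (∀ r x, ∑ a, q2 r x a = 1) ∧
    ∀ r x a, p r x a = μ r * q1 r a + (1 - μ r) * q2 r x a

/-- The tight points used to show the inequality is facet-defining. -/
def a2oPt (n : ℕ) (m : Fin (2 * n)) : Fin n × Bool → ℝ :=
  fun rx =>
    if (m : ℕ) < n then
      (if rx.2 then (if (rx.1 : ℕ) = (m : ℕ) then 1 else 0) else 1)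
    else
      (if rx.2 then 0 else (if (rx.1 : ℕ) = (m : ℕ) - n then 0 else 1))

/-- All-to-one Bell game: partial-order correlations win with probability at
most `1 − 1/(2n)` (the referee picks `r` and `x` uniformly), and the
corresponding lifted inequality
`Σ_r p(0|r,0) − Σ_r p(0|r,1) ≤ n − 1` is facet-defining for the
all-to-one partial-order-correlations polytope (valid, with `2n` affinely
independent tight points). -/
theorem stmt18 (n : ℕ) (hn : 2 ≤ n) :
    (∀ p : Fin n → Bool → Bool → ℝ, IsA2OCorr n p →
      (1 / (2 * (n : ℝ))) * ∑ r : Fin n, ∑ x : Bool, p r x x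
        ≤ 1 - 1 / (2 * (n : ℝ))) ∧
    (∀ v ∈ A2Opoly n,
      (∑ r : Fin n, v (r, false)) - ∑ r : Fin n, v (r, true) ≤ (n : ℝ) - 1) ∧
    ∃ f : Fin (2 * n) → (Fin n × Bool → ℝ), AffineIndependent ℝ f ∧
      ∀ m, f m ∈ A2Opoly n ∧
        (∑ r : Fin n, f m (r, false)) - ∑ r : Fin n, f m (r, true)
          = (n : ℝ) - 1 := by
  have hnpos : (0:ℝ) < n := by positivity
  refine ⟨?_, ?_, ?_⟩
  · -- game value bound
    rintro p ⟨μ, q1, q2, hμ0, hμ1, hq10, hq11, hq20, hq21, hdec⟩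
    have hμle : ∀ r, μ r ≤ 1 := by
      intro r
      calc μ r ≤ ∑ r, μ r := Finset.single_le_sum (fun i _ => hμ0 i) (Finset.mem_univ r)
        _ = 1 := hμ1
    have hq2le : ∀ r x a, q2 r x a ≤ 1 := by
      intro r x a
      have h := hq21 r x
      simp [Fintype.sum_bool] at h
      cases a <;> nlinarith [hq20 r x true, hq20 r x false]
    have key : ∀ r : Fin n, ∑ x : Bool, p r x x ≤ 2 - μ r := by
      intro r
      have hq1 := hq11 r
      simp only [Fintype.sum_bool] at hq1 ⊢
      rw [hdec r true true, hdec r false false]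
      nlinarith [hμle r, hμ0 r, hq2le r true true, hq2le r false false,
        hq20 r true true, hq20 r false false]
    have hS : ∑ r : Fin n, ∑ x : Bool, p r x x ≤ 2 * n - 1 := by
      calc ∑ r : Fin n, ∑ x : Bool, p r x x ≤ ∑ r : Fin n, (2 - μ r) :=
            Finset.sum_le_sum fun r _ => key r
        _ = 2 * n - 1 := by
            rw [Finset.sum_sub_distrib, hμ1, Finset.sum_const, Finset.card_univ,
              Fintype.card_fin]
            ring
    have h1 : (1 / (2 * (n:ℝ))) * ∑ r : Fin n, ∑ x : Bool, p r x x
        ≤ (1 / (2 * (n:ℝ))) * (2 * n - 1) := by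
      apply mul_le_mul_of_nonneg_left hS
      positivity
    have h2 : (1 / (2 * (n:ℝ))) * (2 * n - 1) = 1 - 1 / (2 * (n:ℝ)) := by
      field_simp
    linarith
  · -- validity on the polytope
    intro v hv
    have hlin : IsLinearMap ℝ (fun v : Fin n × Bool → ℝ =>
        (∑ r : Fin n, v (r, false)) - ∑ r : Fin n, v (r, true)) := by
      constructor
      · intro u w
        simp only [Pi.add_apply, Finset.sum_add_distrib]; ring
      · intro c u
        simp only [Pi.smul_apply, smul_eq_mul, ← Finset.mul_sum]; ring
    have hsub : detA2O n ⊆ {w : Fin n × Bool → ℝ |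
        (∑ r : Fin n, w (r, false)) - ∑ r : Fin n, w (r, true) ≤ (n : ℝ) - 1} := by
      rintro w ⟨h01, r0, hr0⟩
      simp only [Set.mem_setOf_eq]
      have hterm : ∀ r : Fin n, w (r, false) - w (r, true) ≤ 1 := by
        intro r
        rcases h01 (r, false) with h | h <;> rcases h01 (r, true) with h' | h' <;>
          simp [h, h']
      have hsum : (∑ r : Fin n, w (r, false)) - ∑ r : Fin n, w (r, true)
          = ∑ r : Fin n, (w (r, false) - w (r, true)) := by
        rw [Finset.sum_sub_distrib]
      rw [hsum, ← Finset.add_sum_erase _ _ (Finset.mem_univ r0), hr0]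
      have hb := Finset.sum_le_card_nsmul (Finset.univ.erase r0)
        (fun r => w (r, false) - w (r, true)) 1 (fun r _ => hterm r)
      have hc : (Finset.univ.erase r0).card = n - 1 := by
        rw [Finset.card_erase_of_mem (Finset.mem_univ r0), Finset.card_univ,
          Fintype.card_fin]
      rw [hc] at hb
      have hcast : ((n - 1 : ℕ) : ℝ) = (n:ℝ) - 1 := by
        have h1n : 1 ≤ n := by omega
        push_cast [h1n]; ring
      simp only [nsmul_eq_mul, mul_one] at hb
      rw [hcast] at hb
      linarith
    exact convexHull_min hsub (convex_halfSpace_le hlin _) hv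
  · -- facet: 2n affinely independent tight points
    refine ⟨a2oPt n, ?_, fun m => ⟨?_, ?_⟩⟩
    · rw [affineIndependent_iff_of_fintype]
      intro w hw0 hwv
      rw [Finset.weightedVSub_eq_linear_combination _ hw0] at hwv
      have gb : ∀ i : Fin n, w (⟨n + i, by omega⟩ : Fin (2 * n)) = 0 := by
        intro i
        set t : Fin (2 * n) := ⟨n + i, by omega⟩ with ht
        have hcoord := congrFun hwv (i, false)
        simp only [Finset.sum_apply, Pi.smul_apply, smul_eq_mul, Pi.zero_apply] at hcoord
        have hval : ∀ m : Fin (2 * n), a2oPt n m (i, false)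
            = 1 - (if m = t then 1 else 0) := by
          intro m
          simp only [a2oPt]
          by_cases hm : (m : ℕ) < n
          · have hne : m ≠ t := by
              intro h
              have : (m : ℕ) = n + i := by rw [h]
              omega
            simp [hm, hne]
          · by_cases he : (i : ℕ) = (m : ℕ) - n
            · have heq : m = t := by
                apply Fin.ext
                simp only [ht]
                omega
              rw [if_neg hm, if_pos heq]
              simp [he]
            · have hne : m ≠ t := by
                intro h
                have : (m : ℕ) = n + i := by rw [h]
                omega
              simp [hm, he, hne]
        have hstep : ∀ m : Fin (2 * n),
            w m * a2oPt n m (i, false) = w m - (if m = t then w m else 0) := by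
          intro m; rw [hval m]; split_ifs <;> ring
        rw [Finset.sum_congr rfl (fun m _ => hstep m), Finset.sum_sub_distrib,
          Finset.sum_ite_eq' Finset.univ t w, hw0] at hcoord
        simpa using hcoord
      have ea : ∀ i : Fin n, w (⟨i, by omega⟩ : Fin (2 * n)) = 0 := by
        intro i
        set t : Fin (2 * n) := ⟨i, by omega⟩ with ht
        have hcoord := congrFun hwv (i, true)
        simp only [Finset.sum_apply, Pi.smul_apply, smul_eq_mul, Pi.zero_apply] at hcoord
        have hval : ∀ m : Fin (2 * n), a2oPt n m (i, true)
            = (if m = t then 1 else 0) := by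
          intro m
          simp only [a2oPt]
          by_cases hm : (m : ℕ) < n
          · by_cases he : (i : ℕ) = (m : ℕ)
            · have heq : m = t := by apply Fin.ext; simp only [ht]; omega
              rw [if_pos hm, if_pos heq]
              simp [he]
            · have hne : m ≠ t := by
                intro h
                have : (m : ℕ) = (i : ℕ) := by rw [h]
                omega
              simp [hm, he, hne]
          · have hne : m ≠ t := by
              intro h
              have : (m : ℕ) = (i : ℕ) := by rw [h]
              have := i.isLt
              omega
            simp [hm, hne]
        have hstep : ∀ m : Fin (2 * n),
            w m * a2oPt n m (i, true) = (if m = t then w m else 0) := by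
          intro m; rw [hval m]; split_ifs <;> ring
        rw [Finset.sum_congr rfl (fun m _ => hstep m),
          Finset.sum_ite_eq' Finset.univ t w] at hcoord
        simpa using hcoord
      intro m
      by_cases hm : (m : ℕ) < n
      · have := ea ⟨m, hm⟩
        have heq : (⟨(⟨(m : ℕ), hm⟩ : Fin n), by omega⟩ : Fin (2 * n)) = m := by
          apply Fin.ext; simp
        rwa [heq] at this
      · have hlt : (m : ℕ) - n < n := by have := m.isLt; omega
        have := gb ⟨(m : ℕ) - n, hlt⟩
        have heq : (⟨n + ((⟨(m : ℕ) - n, hlt⟩ : Fin n) : ℕ), by omega⟩ : Fin (2 * n)) = m := by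
          apply Fin.ext; simp; omega
        rwa [heq] at this
    · -- membership
      apply subset_convexHull
      constructor
      · intro i
        simp only [a2oPt]
        split_ifs <;> simp
      · by_cases hm : (m : ℕ) < n
        · refine ⟨⟨m, hm⟩, ?_⟩
          simp [a2oPt, hm]
        · have hlt : (m : ℕ) - n < n := by have := m.isLt; omega
          refine ⟨⟨(m : ℕ) - n, hlt⟩, ?_⟩
          simp [a2oPt, hm]
    · -- tightness
      by_cases hm : (m : ℕ) < n
      · have h1 : ∑ r : Fin n, a2oPt n m (r, false) = (n : ℝ) := by
          simp [a2oPt, hm]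
        have h2 : ∑ r : Fin n, a2oPt n m (r, true) = 1 := by
          have : ∀ r : Fin n, a2oPt n m (r, true)
              = (if r = (⟨m, hm⟩ : Fin n) then 1 else 0) := by
            intro r
            by_cases h : r = (⟨m, hm⟩ : Fin n)
            · have h' : (r : ℕ) = (m : ℕ) := by rw [h]
              simp [a2oPt, hm, h, h']
            · have h' : (r : ℕ) ≠ (m : ℕ) := by simpa [Fin.ext_iff] using h
              simp [a2oPt, hm, h, h']
          rw [Finset.sum_congr rfl (fun r _ => this r), Finset.sum_ite_eq']
          simp
        rw [h1, h2]
      · have h2 : ∑ r : Fin n, a2oPt n m (r, true) = 0 := by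
          simp [a2oPt, hm]
        have h1 : ∑ r : Fin n, a2oPt n m (r, false) = (n : ℝ) - 1 := by
          have hlt : (m : ℕ) - n < n := by have := m.isLt; omega
          have : ∀ r : Fin n, a2oPt n m (r, false)
              = 1 - (if r = (⟨(m : ℕ) - n, hlt⟩ : Fin n) then 1 else 0) := by
            intro r
            by_cases h : r = (⟨(m : ℕ) - n, hlt⟩ : Fin n)
            · have h' : (r : ℕ) = (m : ℕ) - n := by rw [h]
              simp [a2oPt, hm, h, h']
            · have h' : (r : ℕ) ≠ (m : ℕ) - n := by simpa [Fin.ext_iff] using h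
              simp [a2oPt, hm, h, h']
          rw [Finset.sum_congr rfl (fun r _ => this r), Finset.sum_sub_distrib,
            Finset.sum_ite_eq']
          simp
        rw [h1, h2]
        ring
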